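/- For measurable A ⊆ ℝ^d and δ₁, δ₂, ε₁, ε₂ > 0, one has Z_{δ₁}(ε₁) Z_{δ₂}(ε₂) A ⊆ Z_{δ₁+δ₂}(ε₁ε₂ · δ₁^d δ₂^d / ((δ₁+δ₂)^d · min(δ₁,δ₂)^d)) A. -/

import Mathlib

open MeasureTheory
open Set
open scoped ENNReal

noncomputable section

/-- Open axis-parallel cube of side length r centered at x in ℝ^d. -/
def cube (d : ℕ) (x : EuclideanSpace ℝ (Fin d)) (r : ℝ) :
    Set (EuclideanSpace ℝ (Fin d)) :=
  {y | ∀ i, |y i - x i| < r / 2}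

/-- The zooming-out operator: Z_δ(ε)A = {x : |Q(x,δ) ∩ A| > ε·δ^d}. -/
def Zoom (d : ℕ) (δ ε : ℝ) (A : Set (EuclideanSpace ℝ (Fin d))) :
    Set (EuclideanSpace ℝ (Fin d)) :=
  {x | ENNReal.ofReal (ε * δ ^ d) < volume (cube d x δ ∩ A)}

lemma cube_eq_preimage (d : ℕ) (x : EuclideanSpace ℝ (Fin d)) (r : ℝ) :
    cube d x r = ((MeasurableEquiv.toLp 2 (Fin d → ℝ)).symm) ⁻¹'
      (Set.univ.pi fun i => Set.Ioo (x i - r/2) (x i + r/2)) := by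
  ext y
  simp only [cube, mem_setOf_eq, mem_preimage, mem_pi, mem_univ, forall_true_left, mem_Ioo]
  refine forall_congr' fun i => ?_
  have : ((MeasurableEquiv.toLp 2 (Fin d → ℝ)).symm) y i = y i := rfl
  rw [this, abs_sub_lt_iff]
  constructor <;> intro h <;> constructor <;> linarith [h.1, h.2]

lemma isOpen_cube (d : ℕ) (x : EuclideanSpace ℝ (Fin d)) (r : ℝ) :
    IsOpen (cube d x r) := by
  have : cube d x r = ⋂ i, {y : EuclideanSpace ℝ (Fin d) | |y i - x i| < r / 2} := by
    ext y; simp [cube]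
  rw [this]
  exact isOpen_iInter_of_finite fun i =>
    isOpen_lt (continuous_abs.comp (((EuclideanSpace.proj (𝕜 := ℝ) i).continuous).sub
      continuous_const)) continuous_const

lemma measurableSet_cube (d : ℕ) (x : EuclideanSpace ℝ (Fin d)) (r : ℝ) :
    MeasurableSet (cube d x r) := (isOpen_cube d x r).measurableSet

lemma mem_cube_comm {d : ℕ} {y z : EuclideanSpace ℝ (Fin d)} {r : ℝ} :
    z ∈ cube d y r ↔ y ∈ cube d z r :=
  forall_congr' fun i => by rw [abs_sub_comm]

lemma volume_cube_inter_cube_le (d : ℕ) (x z : EuclideanSpace ℝ (Fin d)) {r₁ r₂ : ℝ}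
    (h₁ : 0 < r₁) (h₂ : 0 < r₂) :
    volume (cube d x r₁ ∩ cube d z r₂) ≤ ENNReal.ofReal ((min r₁ r₂) ^ d) := by
  rw [cube_eq_preimage, cube_eq_preimage, ← Set.preimage_inter, ← Set.pi_inter_distrib]
  rw [(EuclideanSpace.volume_preserving_symm_measurableEquiv_toLp (Fin d)).measure_preimage
    (MeasurableSet.univ_pi fun i =>
      measurableSet_Ioo.inter measurableSet_Ioo).nullMeasurableSet]
  rw [volume_pi_pi]
  have hm : (0:ℝ) ≤ min r₁ r₂ := le_min h₁.le h₂.le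
  calc ∏ i : Fin d, volume (Ioo (x i - r₁/2) (x i + r₁/2) ∩ Ioo (z i - r₂/2) (z i + r₂/2))
      ≤ ∏ _i : Fin d, ENNReal.ofReal (min r₁ r₂) := by
        refine Finset.prod_le_prod' fun i _ => ?_
        rw [Set.Ioo_inter_Ioo, Real.volume_Ioo]
        refine ENNReal.ofReal_le_ofReal ?_
        rcases le_total r₁ r₂ with h | h
        · simp only [min_eq_left h]
          have := le_max_left (x i - r₁/2) (z i - r₂/2)
          have := min_le_left (x i + r₁/2) (z i + r₂/2)
          linarith
        · simp only [min_eq_right h]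
          have := le_max_right (x i - r₁/2) (z i - r₂/2)
          have := min_le_right (x i + r₁/2) (z i + r₂/2)
          linarith
    _ = ENNReal.ofReal ((min r₁ r₂) ^ d) := by
        rw [Finset.prod_const, ENNReal.ofReal_pow hm]
        simp

/-- Z_{δ₁}(ε₁) Z_{δ₂}(ε₂) A ⊆
Z_{δ₁+δ₂}(ε₁ε₂ δ₁^d δ₂^d / ((δ₁+δ₂)^d (min δ₁ δ₂)^d)) A. -/
theorem stmt7 (d : ℕ) (A : Set (EuclideanSpace ℝ (Fin d)))
    (δ₁ δ₂ ε₁ ε₂ : ℝ) (hδ₁ : 0 < δ₁) (hδ₂ : 0 < δ₂) (hε₁ : 0 < ε₁) (hε₂ : 0 < ε₂) :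
    Zoom d δ₁ ε₁ (Zoom d δ₂ ε₂ A) ⊆
      Zoom d (δ₁ + δ₂)
        (ε₁ * ε₂ * (δ₁ ^ d * δ₂ ^ d) / ((δ₁ + δ₂) ^ d * (min δ₁ δ₂) ^ d)) A := by
  set A' := toMeasurable volume A with hA'def
  have hA' : MeasurableSet A' := measurableSet_toMeasurable _ _
  have hZoomEq : ∀ δ ε : ℝ, Zoom d δ ε A = Zoom d δ ε A' := by
    intro δ ε
    unfold Zoom
    ext w
    rw [mem_setOf_eq, mem_setOf_eq, inter_comm, inter_comm (cube d w δ),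
      Measure.measure_toMeasurable_inter_of_sFinite (measurableSet_cube d w δ)]
  rw [hZoomEq δ₂ ε₂, hZoomEq (δ₁ + δ₂)]
  intro x hx
  set B := Zoom d δ₂ ε₂ A' with hBdef
  -- measurability of y ↦ volume (cube d y δ₂ ∩ A')
  set F : EuclideanSpace ℝ (Fin d) → ℝ≥0∞ := fun y => volume (cube d y δ₂ ∩ A') with hFdef
  have hs2 : MeasurableSet {p : EuclideanSpace ℝ (Fin d) × EuclideanSpace ℝ (Fin d) | p.2 ∈ cube d p.1 δ₂ ∩ A'} := by
    have : {p : EuclideanSpace ℝ (Fin d) × EuclideanSpace ℝ (Fin d) | p.2 ∈ cube d p.1 δ₂ ∩ A'}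
        = (⋂ i, {p : EuclideanSpace ℝ (Fin d) × EuclideanSpace ℝ (Fin d) | |p.2 i - p.1 i| < δ₂ / 2}) ∩ {p : EuclideanSpace ℝ (Fin d) × EuclideanSpace ℝ (Fin d) | p.2 ∈ A'} := by
      ext p; simp [cube, mem_iInter]
    rw [this]
    refine MeasurableSet.inter ?_ (measurable_snd hA')
    refine (isOpen_iInter_of_finite fun i => ?_).measurableSet
    exact isOpen_lt (continuous_abs.comp
      ((((EuclideanSpace.proj (𝕜 := ℝ) i).continuous).comp continuous_snd).sub
       (((EuclideanSpace.proj (𝕜 := ℝ) i).continuous).comp continuous_fst))) continuous_const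
  have hF : Measurable F := by
    have := measurable_measure_prodMk_left (ν := (volume : Measure (EuclideanSpace ℝ (Fin d)))) hs2
    convert this using 2
    rfl
  have hB : MeasurableSet B := by
    have : B = F ⁻¹' (Set.Ioi (ENNReal.ofReal (ε₂ * δ₂ ^ d))) := rfl
    rw [this]; exact hF measurableSet_Ioi
  set S : Set (EuclideanSpace ℝ (Fin d)) := cube d x δ₁ ∩ B with hSdef
  have hS : MeasurableSet S := (measurableSet_cube d x δ₁).inter hB
  have hxS : ENNReal.ofReal (ε₁ * δ₁ ^ d) < volume S := hx
  set T : Set (EuclideanSpace ℝ (Fin d) × EuclideanSpace ℝ (Fin d)) := {p | p.1 ∈ S} ∩ {p : EuclideanSpace ℝ (Fin d) × EuclideanSpace ℝ (Fin d) | p.2 ∈ cube d p.1 δ₂ ∩ A'} with hTdef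
  have hT : MeasurableSet T := (measurable_fst hS).inter hs2
  set c₂ : ℝ≥0∞ := ENNReal.ofReal (ε₂ * δ₂ ^ d) with hc₂def
  set m : ℝ≥0∞ := ENNReal.ofReal ((min δ₁ δ₂) ^ d) with hmdef
  set V : ℝ≥0∞ := volume (cube d x (δ₁ + δ₂) ∩ A') with hVdef
  have hc₂0 : c₂ ≠ 0 := by
    simp only [hc₂def, ne_eq, ENNReal.ofReal_eq_zero, not_le]
    positivity
  have hc₂top : c₂ ≠ ⊤ := ENNReal.ofReal_ne_top
  -- step (a)
  have h1 : ENNReal.ofReal (ε₁ * δ₁ ^ d) * c₂ < volume S * c₂ := by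
    rw [mul_comm _ c₂, mul_comm _ c₂]
    exact ENNReal.mul_lt_mul_right hc₂0 hc₂top hxS
  -- step (b)
  have h2 : volume S * c₂ ≤ ∫⁻ y, S.indicator F y := by
    rw [mul_comm, ← lintegral_indicator_const hS c₂]
    refine lintegral_mono fun y => ?_
    by_cases hy : y ∈ S
    · rw [indicator_of_mem hy, indicator_of_mem hy]
      exact (hy.2 : c₂ < F y).le
    · rw [indicator_of_notMem hy, indicator_of_notMem hy]
  -- step (c)
  have h3 : ∫⁻ y, S.indicator F y = ∫⁻ y, ∫⁻ z, T.indicator 1 (y, z) := by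
    refine lintegral_congr fun y => ?_
    by_cases hy : y ∈ S
    · rw [indicator_of_mem hy]
      have : (fun z => T.indicator
            (1 : EuclideanSpace ℝ (Fin d) × EuclideanSpace ℝ (Fin d) → ℝ≥0∞) (y, z))
          = (cube d y δ₂ ∩ A').indicator (1 : EuclideanSpace ℝ (Fin d) → ℝ≥0∞) := by
        funext z
        by_cases hz : z ∈ cube d y δ₂ ∩ A'
        · rw [indicator_of_mem (show (y, z) ∈ T from ⟨hy, hz⟩), indicator_of_mem hz]; rfl
        · rw [indicator_of_notMem (fun h => hz h.2), indicator_of_notMem hz]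
      rw [lintegral_congr fun z => congrFun this z,
        lintegral_indicator_one ((measurableSet_cube d y δ₂).inter hA')]
    · rw [indicator_of_notMem hy]
      rw [lintegral_congr (g := fun _ => (0:ℝ≥0∞)) fun z =>
        indicator_of_notMem (fun h => hy h.1)
          (1 : EuclideanSpace ℝ (Fin d) × EuclideanSpace ℝ (Fin d) → ℝ≥0∞),
        lintegral_const, zero_mul]
  -- step (d): Tonelli swap
  have h4 : ∫⁻ y, ∫⁻ z, T.indicator 1 (y, z) = ∫⁻ z, ∫⁻ y, T.indicator 1 (y, z) := by
    have hmeas : AEMeasurable (Function.uncurry fun y z => T.indicator (1 : EuclideanSpace ℝ (Fin d) × EuclideanSpace ℝ (Fin d) → ℝ≥0∞) (y, z))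
        ((volume : Measure (EuclideanSpace ℝ (Fin d))).prod volume) := by
      have : Function.uncurry (fun y z => T.indicator (1 : EuclideanSpace ℝ (Fin d) × EuclideanSpace ℝ (Fin d) → ℝ≥0∞) (y, z)) = T.indicator (1 : EuclideanSpace ℝ (Fin d) × EuclideanSpace ℝ (Fin d) → ℝ≥0∞) :=
        funext fun ⟨a, b⟩ => rfl
      rw [this]
      exact (measurable_one.indicator hT).aemeasurable
    exact lintegral_lintegral_swap hmeas
  -- step (e): bound inner integral
  have h5 : ∀ z : EuclideanSpace ℝ (Fin d), (∫⁻ y, T.indicator 1 (y, z)) ≤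
      (cube d x (δ₁ + δ₂) ∩ A').indicator (fun _ => m) z := by
    intro z
    by_cases hzA : z ∈ A'
    · have hrw : (fun y => T.indicator (1 : EuclideanSpace ℝ (Fin d) × EuclideanSpace ℝ (Fin d) → ℝ≥0∞) (y, z))
          = (S ∩ cube d z δ₂).indicator (1 : EuclideanSpace ℝ (Fin d) → ℝ≥0∞) := by
        funext y
        have hmem : (y, z) ∈ T ↔ y ∈ S ∩ cube d z δ₂ := by
          constructor
          · rintro ⟨h1', h2'⟩; exact ⟨h1', mem_cube_comm.1 h2'.1⟩
          · rintro ⟨h1', h2'⟩; exact ⟨h1', mem_cube_comm.2 h2', hzA⟩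
        by_cases hy : y ∈ S ∩ cube d z δ₂
        · rw [indicator_of_mem (hmem.2 hy), indicator_of_mem hy]; rfl
        · rw [indicator_of_notMem (fun h => hy (hmem.1 h)), indicator_of_notMem hy]
      rw [lintegral_congr fun y => congrFun hrw y,
        lintegral_indicator_one (hS.inter (measurableSet_cube d z δ₂))]
      by_cases hzc : z ∈ cube d x (δ₁ + δ₂)
      · rw [indicator_of_mem (show z ∈ cube d x (δ₁ + δ₂) ∩ A' from ⟨hzc, hzA⟩)]
        calc volume (S ∩ cube d z δ₂) ≤ volume (cube d x δ₁ ∩ cube d z δ₂) :=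
              measure_mono (inter_subset_inter_left _ inter_subset_left)
          _ ≤ m := volume_cube_inter_cube_le d x z hδ₁ hδ₂
      · have hempty : S ∩ cube d z δ₂ = ∅ := by
          ext y
          simp only [mem_inter_iff, mem_empty_iff_false, iff_false, not_and]
          intro hyS hyz
          exact hzc fun i => by
            have h1' := hyS.1 i
            have h2' := (mem_cube_comm.2 hyz : z ∈ cube d y δ₂) i
            calc |z i - x i| ≤ |z i - y i| + |y i - x i| := abs_sub_le _ _ _
              _ < (δ₁ + δ₂) / 2 := by linarith
        rw [hempty, measure_empty]
        exact zero_le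
    · rw [lintegral_congr (g := fun _ => (0:ℝ≥0∞)) fun y =>
        indicator_of_notMem (fun h => hzA h.2.2)
          (1 : EuclideanSpace ℝ (Fin d) × EuclideanSpace ℝ (Fin d) → ℝ≥0∞),
        lintegral_const, zero_mul]
      exact zero_le
  -- step (f)
  have h6 : (∫⁻ z, (cube d x (δ₁ + δ₂) ∩ A').indicator (fun _ => m) z) = m * V :=
    lintegral_indicator_const ((measurableSet_cube d x (δ₁ + δ₂)).inter hA') m
  have key : ENNReal.ofReal (ε₁ * δ₁ ^ d * (ε₂ * δ₂ ^ d)) < m * V := by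
    rw [ENNReal.ofReal_mul (by positivity)]
    calc ENNReal.ofReal (ε₁ * δ₁ ^ d) * c₂ < volume S * c₂ := h1
      _ ≤ ∫⁻ y, S.indicator F y := h2
      _ = ∫⁻ y, ∫⁻ z, T.indicator 1 (y, z) := h3
      _ = ∫⁻ z, ∫⁻ y, T.indicator 1 (y, z) := h4
      _ ≤ ∫⁻ z, (cube d x (δ₁ + δ₂) ∩ A').indicator (fun _ => m) z := lintegral_mono h5
      _ = m * V := h6
  -- conclude
  show ENNReal.ofReal (ε₁ * ε₂ * (δ₁ ^ d * δ₂ ^ d) / ((δ₁ + δ₂) ^ d * (min δ₁ δ₂) ^ d)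
      * (δ₁ + δ₂) ^ d) < V
  have hmin : (0:ℝ) < min δ₁ δ₂ := lt_min hδ₁ hδ₂
  have hsum : (0:ℝ) < δ₁ + δ₂ := by linarith
  have harith : ε₁ * ε₂ * (δ₁ ^ d * δ₂ ^ d) / ((δ₁ + δ₂) ^ d * (min δ₁ δ₂) ^ d)
      * (δ₁ + δ₂) ^ d = ε₁ * δ₁ ^ d * (ε₂ * δ₂ ^ d) / (min δ₁ δ₂) ^ d := by
    have h1' : ((δ₁ + δ₂) ^ d : ℝ) ≠ 0 := by positivity
    have h2' : ((min δ₁ δ₂) ^ d : ℝ) ≠ 0 := by positivity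
    field_simp
  rw [harith, ENNReal.ofReal_div_of_pos (by positivity)]
  have hm0 : m ≠ 0 := by
    simp only [hmdef, ne_eq, ENNReal.ofReal_eq_zero, not_le]
    positivity
  rw [ENNReal.div_lt_iff (Or.inl hm0) (Or.inl ENNReal.ofReal_ne_top)]
  rw [mul_comm (V) (m)]
  exact key

end
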